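/- (Monopoly pricing, high QoS) Suppose q ≥ (w_p·o + 2)/w_l, i.e., Δ ≥ 2 where Δ = w_l·q − w_p·o. Then the monopoly profit M(p) = (p − o)·max(min(w_l·q − w_p·p, 1), 0) is maximized over p ≥ o at p* = (w_l·q − 1)/w_p, and the maximal profit equals M(p*) = (Δ − 1)/w_p. -/

import Mathlib

/-- Monopoly pricing, high QoS: if q ≥ (w_p·o + 2)/w_l (i.e. Δ ≥ 2 with
Δ = w_l·q − w_p·o), then the monopoly profit M(p) = (p − o)·max(min(w_l·q − w_p·p, 1), 0)
is maximized over p ≥ o at p* = (w_l·q − 1)/w_p, and M(p*) = (Δ − 1)/w_p. -/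
theorem stmt_11 (wl wp q o : ℝ)
    (hwl : 0 < wl) (hwp : 0 < wp) (hq : 0 ≤ q) (ho : 0 ≤ o)
    (hhi : (wp * o + 2) / wl ≤ q)
    (Δ : ℝ) (hΔ : Δ = wl * q - wp * o)
    (M : ℝ → ℝ) (hM : ∀ p, M p = (p - o) * max (min (wl * q - wp * p) 1) 0)
    (pstar : ℝ) (hp : pstar = (wl * q - 1) / wp) :
    (∀ p : ℝ, o ≤ p → M p ≤ M pstar) ∧ M pstar = (Δ - 1) / wp := by
  have hΔ2 : 2 ≤ Δ := by
    have := (div_le_iff₀ hwl).mp hhi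
    nlinarith
  have hs : wl * q - wp * pstar = 1 := by
    rw [hp, mul_div_assoc', mul_div_cancel_left₀ _ hwp.ne']
    ring
  have hMstar : M pstar = (Δ - 1) / wp := by
    rw [hM, hs]
    norm_num
    rw [hp, hΔ]
    field_simp
    ring
  refine ⟨fun p hpo => ?_, hMstar⟩
  rw [hM, hMstar]
  have hd : (0:ℝ) ≤ (Δ - 1) / wp := div_nonneg (by linarith) hwp.le
  rcases le_or_gt (wl * q - wp * p) 0 with h0 | h0
  · have hm : max (min (wl * q - wp * p) 1) 0 = 0 := by
      rw [max_eq_right]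
      exact min_le_of_left_le h0
    rw [hm]
    linarith
  · rcases le_or_gt 1 (wl * q - wp * p) with h1 | h1
    · have hm : max (min (wl * q - wp * p) 1) 0 = 1 := by
        rw [min_eq_right h1, max_eq_left (by norm_num)]
      rw [hm, le_div_iff₀ hwp]
      nlinarith
    · have hm : max (min (wl * q - wp * p) 1) 0 = wl * q - wp * p := by
        rw [min_eq_left h1.le, max_eq_left h0.le]
      rw [hm, le_div_iff₀ hwp]
      have ht : Δ - 1 ≤ wp * (p - o) := by nlinarith
      nlinarith [mul_nonneg (sub_nonneg.mpr hpo) h0.le]
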